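/- Let m ≥ 1 and let h₁,…,h_m be nonzero integers; set p_X(z) := 2^{-m}·|{(ε₁,…,ε_m) ∈ {0,1}^m : ε₁h₁+⋯+ε_mh_m = z}| for z ∈ ℤ, and p_Y(j) := C(m,j)/2^m for 0 ≤ j ≤ m (and 0 otherwise). Then the decreasing rearrangement of p_Y majorizes that of p_X; concretely, for every finite set S ⊆ ℤ there exists a finite set T ⊆ ℤ with |T| = |S| such that Σ_{z∈S} p_X(z) ≤ Σ_{j∈T} p_Y(j). Moreover, the decreasing rearrangements of p_X and p_Y coincide if and only if |h₁| = |h₂| = ⋯ = |h_m|. -/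

import Mathlib

open scoped BigOperators

/-- Probability mass function of `h₁X₁+⋯+h_mX_m`, where `X₁,…,X_m` are independent and
uniform on `{0,1}`: `p_X(z) = 2^{-m}·|{ε ∈ {0,1}^m : ε₁h₁+⋯+ε_mh_m = z}|`. -/
noncomputable def pX {m : ℕ} (h : Fin m → ℤ) (z : ℤ) : ℝ :=
  ((Finset.univ.filter fun ε : Fin m → Bool =>
      (∑ i ∈ Finset.univ.filter (fun i => ε i = true), h i) = z).card : ℝ) / 2 ^ m

/-- Probability mass function of the binomial distribution `B(m,1/2)`. -/
noncomputable def pY (m : ℕ) (z : ℤ) : ℝ :=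
  if 0 ≤ z ∧ z ≤ m then (m.choose z.toNat : ℝ) / 2 ^ m else 0

section Aux
open Finset
open scoped symmDiff

/-- fiber as finsets -/
def fib {m : ℕ} (h : Fin m → ℤ) (z : ℤ) : Finset (Finset (Fin m)) :=
  univ.filter fun E => ∑ i ∈ E, h i = z

lemma pX_eq {m : ℕ} (h : Fin m → ℤ) (z : ℤ) :
    pX h z = ((fib h z).card : ℝ) / 2 ^ m := by
  unfold pX fib
  congr 2
  apply Finset.card_bij (fun ε _ => univ.filter fun i => ε i = true)
  · intro ε hε
    simp only [mem_filter, mem_univ, true_and] at hε ⊢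
    exact hε
  · intro ε₁ h1 ε₂ h2 he
    funext i
    have := Finset.ext_iff.1 he i
    simp only [mem_filter, mem_univ, true_and] at this
    cases hb : ε₁ i <;> cases hb2 : ε₂ i <;> simp [hb, hb2] at this ⊢
  · intro E hE
    refine ⟨fun i => decide (i ∈ E), ?_, ?_⟩
    · simp only [mem_filter, mem_univ, true_and] at hE ⊢
      simpa using hE
    · ext i; simp

def negpart {m : ℕ} (h : Fin m → ℤ) : ℤ := ∑ i, (if h i < 0 then -h i else 0)

lemma sum_symmDiff {m : ℕ} (h : Fin m → ℤ) (E : Finset (Fin m)) :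
    ∑ i ∈ E ∆ (univ.filter fun i => h i < 0), |h i| = (∑ i ∈ E, h i) + negpart h := by
  classical
  have e1 : ∑ i ∈ E ∆ (univ.filter fun i => h i < 0), |h i|
      = ∑ i : Fin m, (if i ∈ E ∆ (univ.filter fun i => h i < 0) then |h i| else 0) := by
    rw [Finset.sum_ite_mem, Finset.univ_inter]
  have e2 : ∑ i ∈ E, h i = ∑ i : Fin m, (if i ∈ E then h i else 0) := by
    rw [Finset.sum_ite_mem, Finset.univ_inter]
  rw [e1, e2, negpart, ← Finset.sum_add_distrib]
  apply Finset.sum_congr rfl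
  intro i _
  by_cases hn : h i < 0 <;> by_cases hE : i ∈ E <;>
    simp [Finset.mem_symmDiff, hn, hE, abs_of_neg, abs_of_nonneg, le_of_not_gt, not_lt.1]

lemma fib_flip {m : ℕ} (h : Fin m → ℤ) (z : ℤ) :
    (fib h z).card = (fib (fun i => |h i|) (z + negpart h)).card := by
  classical
  apply Finset.card_bij (fun E _ => E ∆ (univ.filter fun i => h i < 0))
  · intro E hE
    simp only [fib, mem_filter, mem_univ, true_and] at hE ⊢
    rw [sum_symmDiff, hE]
  · intro E₁ _ E₂ _ he
    have := congrArg (· ∆ (univ.filter fun i => h i < 0)) he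
    simpa [symmDiff_symmDiff_cancel_right] using this
  · intro E hE
    refine ⟨E ∆ (univ.filter fun i => h i < 0), ?_, by simp [symmDiff_symmDiff_cancel_right]⟩
    simp only [fib, mem_filter, mem_univ, true_and] at hE ⊢
    have h2 := sum_symmDiff h (E ∆ (univ.filter fun i => h i < 0))
    rw [symmDiff_symmDiff_cancel_right] at h2
    omega

lemma card_filter_card_eq (m j : ℕ) :
    ((univ : Finset (Finset (Fin m))).filter fun E => E.card = j).card = m.choose j := by
  have : ((univ : Finset (Finset (Fin m))).filter fun E => E.card = j)
      = Finset.powersetCard j univ := by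
    ext E; simp [Finset.mem_powersetCard_univ]
  rw [this, Finset.card_powersetCard, Finset.card_univ, Fintype.card_fin]

lemma fib_antichain {m : ℕ} (g : Fin m → ℤ) (hg : ∀ i, 0 < g i) (z : ℤ) :
    IsAntichain (· ⊆ ·) ((fib g z : Finset (Finset (Fin m))) : Set (Finset (Fin m))) := by
  intro E hE F hF hne hsub
  simp only [Finset.coe_filter, Set.mem_setOf_eq, fib, Finset.mem_coe, mem_filter] at hE hF
  have hlt : ∑ i ∈ E, g i < ∑ i ∈ F, g i := by
    apply Finset.sum_lt_sum_of_subset hsub (i := (Finset.ssubset_iff_of_subset hsub).1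
      (lt_of_le_of_ne hsub (by simpa using hne))|>.choose)
    · exact ((Finset.ssubset_iff_of_subset hsub).1
        (lt_of_le_of_ne hsub (by simpa using hne))).choose_spec.1
    · exact ((Finset.ssubset_iff_of_subset hsub).1
        (lt_of_le_of_ne hsub (by simpa using hne))).choose_spec.2
    · exact hg _
    · intro j _ _; exact (hg j).le
  omega

lemma sum_const_finset {m : ℕ} {g : Fin m → ℤ} {a : ℤ} (hg : ∀ i, g i = a)
    (E : Finset (Fin m)) : ∑ i ∈ E, g i = (E.card : ℤ) * a := by
  rw [Finset.sum_congr rfl (fun i _ => hg i), Finset.sum_const, nsmul_eq_mul]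

lemma fib_const_card {m : ℕ} {g : Fin m → ℤ} {a : ℤ} (ha : a ≠ 0) (hg : ∀ i, g i = a)
    (j : ℤ) : ((fib g (a * j)).card : ℝ) = if 0 ≤ j ∧ j ≤ m then (m.choose j.toNat : ℝ) else 0 := by
  have hfib : fib g (a * j) = (univ.filter fun E : Finset (Fin m) => (E.card : ℤ) = j) := by
    unfold fib
    ext E
    simp only [mem_filter, mem_univ, true_and, sum_const_finset hg]
    constructor
    · intro hE; exact mul_left_cancel₀ ha (by linarith [hE])
    · intro hE; rw [hE]; ring
  rw [hfib]
  by_cases hj : 0 ≤ j ∧ j ≤ m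
  · have : (univ.filter fun E : Finset (Fin m) => (E.card : ℤ) = j)
        = (univ.filter fun E : Finset (Fin m) => E.card = j.toNat) := by
      ext E; simp only [mem_filter, mem_univ, true_and]
      omega
    rw [this, card_filter_card_eq]
    simp [hj]
  · have : (univ.filter fun E : Finset (Fin m) => (E.card : ℤ) = j) = ∅ := by
      ext E; simp only [mem_filter, mem_univ, true_and, Finset.notMem_empty, iff_false]
      intro hE
      have := E.card_le_univ
      simp only [Finset.card_univ, Fintype.card_fin] at this
      omega
    rw [this]
    simp [hj]

lemma fib_const_dvd {m : ℕ} {g : Fin m → ℤ} {a : ℤ} (hg : ∀ i, g i = a) {z : ℤ}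
    (hz : (fib g z).Nonempty) : a ∣ z := by
  obtain ⟨E, hE⟩ := hz
  simp only [fib, mem_filter] at hE
  exact ⟨E.card, by rw [← hE.2, sum_const_finset hg]; ring⟩

lemma exists_topk {α : Type*} [DecidableEq α] (f : α → ℝ) :
    ∀ (k : ℕ) (U : Finset α), k ≤ U.card →
    ∃ T ⊆ U, T.card = k ∧ ∀ i ∈ T, ∀ j ∈ U, j ∉ T → f j ≤ f i := by
  intro k
  induction k with
  | zero => exact fun U _ => ⟨∅, empty_subset _, rfl, by simp⟩
  | succ k ih =>
    intro U hU
    have hne : U.Nonempty := Finset.card_pos.1 (by omega)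
    obtain ⟨i, hiU, hmax⟩ := Finset.exists_max_image U f hne
    obtain ⟨T', hT'sub, hT'card, hT'top⟩ := ih (U.erase i) (by
      rw [Finset.card_erase_of_mem hiU]; omega)
    have hiT' : i ∉ T' := fun hc => (Finset.mem_erase.1 (hT'sub hc)).1 rfl
    refine ⟨insert i T', ?_, ?_, ?_⟩
    · intro x hx
      rcases Finset.mem_insert.1 hx with rfl | hx
      · exact hiU
      · exact (Finset.mem_erase.1 (hT'sub hx)).2
    · rw [Finset.card_insert_of_notMem hiT', hT'card]
    · intro x hx j hjU hjT
      have hjne : j ≠ i := fun hc => hjT (hc ▸ Finset.mem_insert_self i T')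
      have hjerase : j ∈ U.erase i := Finset.mem_erase.2 ⟨hjne, hjU⟩
      rcases Finset.mem_insert.1 hx with rfl | hx
      · exact hmax j hjU
      · exact hT'top x hx j hjerase (fun hc => hjT (Finset.mem_insert_of_mem hc))

lemma knapsack {α : Type*} (U T : Finset α) (c t : α → ℝ) (hTU : T ⊆ U)
    (hc : ∀ i ∈ U, 0 ≤ c i) (ht0 : ∀ i ∈ U, 0 ≤ t i) (ht1 : ∀ i ∈ U, t i ≤ 1)
    (htop : ∀ i ∈ T, ∀ j ∈ U, j ∉ T → c j ≤ c i)
    (hsum : ∑ i ∈ U, t i ≤ T.card) :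
    ∑ i ∈ U, c i * t i ≤ ∑ i ∈ T, c i := by
  classical
  rcases T.eq_empty_or_nonempty with rfl | hTne
  · simp only [Finset.card_empty, Nat.cast_zero] at hsum
    have hz : ∀ i ∈ U, t i = 0 :=
      (Finset.sum_eq_zero_iff_of_nonneg ht0).1 (le_antisymm hsum (Finset.sum_nonneg ht0))
    have : ∑ i ∈ U, c i * t i = 0 := Finset.sum_eq_zero fun i hi => by rw [hz i hi, mul_zero]
    simp [this]
  · obtain ⟨i₀, hi₀, hmin⟩ := Finset.exists_min_image T c hTne
    have hsd : ∑ i ∈ U \ T, c i * t i + ∑ i ∈ T, c i * t i = ∑ i ∈ U, c i * t i :=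
      Finset.sum_sdiff hTU
    have hsdt : ∑ i ∈ U \ T, t i + ∑ i ∈ T, t i = ∑ i ∈ U, t i := Finset.sum_sdiff hTU
    have hc0 : 0 ≤ c i₀ := hc i₀ (hTU hi₀)
    have key : ∑ i ∈ U \ T, c i * t i ≤ ∑ i ∈ T, c i * (1 - t i) := by
      calc ∑ i ∈ U \ T, c i * t i ≤ ∑ i ∈ U \ T, c i₀ * t i := by
            apply Finset.sum_le_sum
            intro j hj
            have hjU := (Finset.mem_sdiff.1 hj).1
            have hjT := (Finset.mem_sdiff.1 hj).2
            exact mul_le_mul_of_nonneg_right (htop i₀ hi₀ j hjU hjT) (ht0 j hjU)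
        _ = c i₀ * ∑ i ∈ U \ T, t i := by rw [Finset.mul_sum]
        _ ≤ c i₀ * ((T.card : ℝ) - ∑ i ∈ T, t i) := by
            apply mul_le_mul_of_nonneg_left _ hc0
            linarith
        _ = ∑ i ∈ T, c i₀ * (1 - t i) := by
            rw [← Finset.mul_sum, Finset.sum_sub_distrib, Finset.sum_const, nsmul_eq_mul, mul_one]
        _ ≤ ∑ i ∈ T, c i * (1 - t i) := by
            apply Finset.sum_le_sum
            intro i hi
            have h1t : 0 ≤ 1 - t i := by linarith [ht1 i (hTU hi)]
            exact mul_le_mul_of_nonneg_right (hmin i hi) h1t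
    have hsplit : ∑ i ∈ T, c i * t i + ∑ i ∈ T, c i * (1 - t i) = ∑ i ∈ T, c i := by
      rw [← Finset.sum_add_distrib]
      exact Finset.sum_congr rfl fun i _ => by ring
    linarith

lemma levelset_eq_filter {p : ℤ → ℝ} {A : Finset ℤ} (hA : ∀ z, p z ≠ 0 ↔ z ∈ A)
    {v : ℝ} (hv : v ≠ 0) : {z : ℤ | p z = v} = ↑(A.filter fun z => p z = v) := by
  ext z
  simp only [Set.mem_setOf_eq, Finset.coe_filter, Finset.mem_coe, mem_filter]
  constructor
  · intro hz; exact ⟨(hA z).1 (hz ▸ hv), hz⟩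
  · exact fun hz => hz.2

lemma card_support_eq {p q : ℤ → ℝ} (A B : Finset ℤ)
    (hA : ∀ z, p z ≠ 0 ↔ z ∈ A) (hB : ∀ z, q z ≠ 0 ↔ z ∈ B)
    (hlev : ∀ v : ℝ, v ≠ 0 → {z : ℤ | p z = v}.ncard = {z : ℤ | q z = v}.ncard) :
    A.card = B.card := by
  classical
  have key : ∀ v : ℝ, v ≠ 0 →
      (A.filter fun z => p z = v).card = (B.filter fun z => q z = v).card := by
    intro v hv
    have h1 := hlev v hv
    rw [levelset_eq_filter hA hv, levelset_eq_filter hB hv,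
      Set.ncard_coe_finset, Set.ncard_coe_finset] at h1
    exact h1
  have himg : A.image p = B.image q := by
    ext v
    simp only [Finset.mem_image]
    constructor
    · rintro ⟨z, hz, rfl⟩
      have hv : p z ≠ 0 := (hA z).2 hz
      have : (B.filter fun w => q w = p z).card ≠ 0 := by
        rw [← key _ hv]
        exact Finset.card_ne_zero_of_mem (Finset.mem_filter.2 ⟨hz, rfl⟩)
      obtain ⟨w, hw⟩ := Finset.card_ne_zero.1 this
      exact ⟨w, (Finset.mem_filter.1 hw).1, (Finset.mem_filter.1 hw).2⟩
    · rintro ⟨z, hz, rfl⟩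
      have hv : q z ≠ 0 := (hB z).2 hz
      have : (A.filter fun w => p w = q z).card ≠ 0 := by
        rw [key _ hv]
        exact Finset.card_ne_zero_of_mem (Finset.mem_filter.2 ⟨hz, rfl⟩)
      obtain ⟨w, hw⟩ := Finset.card_ne_zero.1 this
      exact ⟨w, (Finset.mem_filter.1 hw).1, (Finset.mem_filter.1 hw).2⟩
  have hAcard : A.card = ∑ v ∈ A.image p, (A.filter fun z => p z = v).card :=
    Finset.card_eq_sum_card_fiberwise fun z hz => Finset.mem_image_of_mem p hz
  have hBcard : B.card = ∑ v ∈ B.image q, (B.filter fun z => q z = v).card :=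
    Finset.card_eq_sum_card_fiberwise fun z hz => Finset.mem_image_of_mem q hz
  rw [hAcard, hBcard, ← himg]
  apply Finset.sum_congr rfl
  intro v hv
  obtain ⟨z, hz, rfl⟩ := Finset.mem_image.1 hv
  exact key _ ((hA z).2 hz)

lemma support_big {m : ℕ} (g : Fin m → ℤ) (hg : ∀ i, 0 < g i) (i₀ j₀ : Fin m)
    (hij : g i₀ < g j₀) :
    m + 2 ≤ (Finset.image (fun E : Finset (Fin m) => ∑ i ∈ E, g i) univ).card := by
  classical
  set A := Finset.image (fun E : Finset (Fin m) => ∑ i ∈ E, g i) univ with hAdef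
  have hne : i₀ ≠ j₀ := fun hc => by rw [hc] at hij; omega
  have hm2 : 2 ≤ m := by
    have h1 := i₀.isLt
    have h2 := j₀.isLt
    have h3 : i₀.val ≠ j₀.val := fun hc => hne (Fin.ext hc)
    omega
  set a0 : Fin m := ⟨0, by omega⟩ with ha0
  set a1 : Fin m := ⟨1, by omega⟩ with ha1
  have ha01 : a0 ≠ a1 := by simp [ha0, ha1, Fin.ext_iff]
  set τ : Equiv.Perm (Fin m) := Equiv.swap a0 i₀ with hτ
  set j' : Fin m := τ j₀ with hj'
  have hj'0 : j' ≠ a0 := by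
    intro hc
    have h1 : τ j' = τ a0 := congrArg τ hc
    rw [hj', Equiv.swap_apply_self, Equiv.swap_apply_left] at h1
    exact hne h1.symm
  set σ : Equiv.Perm (Fin m) := (Equiv.swap a1 j').trans τ with hσ
  have hσ0 : σ a0 = i₀ := by
    simp only [hσ, Equiv.trans_apply]
    rw [Equiv.swap_apply_of_ne_of_ne ha01 hj'0.symm]
    simp [hτ, Equiv.swap_apply_left]
  have hσ1 : σ a1 = j₀ := by
    simp only [hσ, Equiv.trans_apply]
    rw [Equiv.swap_apply_left, hj']
    simp [hτ]
  -- the increments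
  set G : ℕ → ℤ := fun n => if hn : n < m then g (σ ⟨n, hn⟩) else 1 with hG
  have hGpos : ∀ n, 0 < G n := by
    intro n
    by_cases hn : n < m <;> simp [hG, hn, hg]
  set s : ℕ → ℤ := fun k => ∑ i ∈ range k, G i with hs
  have hsmono : StrictMono s := by
    apply strictMono_nat_of_lt_succ
    intro n
    simp only [hs, Finset.sum_range_succ]
    linarith [hGpos n]
  -- each s k (k ≤ m) is a subset sum
  have hmem : ∀ k, k ≤ m → s k ∈ A := by
    intro k hk
    rw [hAdef, Finset.mem_image]
    refine ⟨Finset.image σ (univ.filter fun i : Fin m => (i : ℕ) < k), mem_univ _, ?_⟩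
    rw [Finset.sum_image (fun x _ y _ hxy => σ.injective hxy)]
    rw [Finset.sum_filter]
    have hstep : ∑ i : Fin m, (if (i : ℕ) < k then g (σ i) else 0)
        = ∑ n ∈ range m, (if n < k then G n else 0) := by
      rw [← Fin.sum_univ_eq_sum_range (fun n => if n < k then G n else 0) m]
      apply Finset.sum_congr rfl
      intro i _
      simp [hG, i.isLt]
    rw [hstep, ← Finset.sum_filter]
    have hfr : (range m).filter (· < k) = range k := by
      ext n; simp only [Finset.mem_filter, Finset.mem_range]; omega
    rw [hfr, hs]
  have hjmem : g j₀ ∈ A := by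
    rw [hAdef, Finset.mem_image]
    exact ⟨{j₀}, mem_univ _, by simp⟩
  -- s 1 = g i₀, s 2 = g i₀ + g j₀
  have hs1 : s 1 = g i₀ := by
    have h0 : (0:ℕ) < m := by omega
    simp only [hs, Finset.sum_range_one, hG]
    rw [dif_pos h0]
    have e0 : (⟨0, h0⟩ : Fin m) = a0 := rfl
    rw [e0, hσ0]
  have hs2 : s 2 = g i₀ + g j₀ := by
    have h1 : (1 : ℕ) < m := by omega
    simp only [hs, Finset.sum_range_succ, Finset.sum_range_zero, zero_add, hG]
    rw [dif_pos (by omega : (0:ℕ) < m), dif_pos h1]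
    have e0 : (⟨0, by omega⟩ : Fin m) = a0 := rfl
    have e1 : (⟨1, h1⟩ : Fin m) = a1 := rfl
    rw [e0, e1, hσ0, hσ1]
  have hnotmem : g j₀ ∉ (range (m + 1)).image s := by
    rw [Finset.mem_image]
    rintro ⟨k, hk, hsk⟩
    rcases le_or_gt k 1 with hk1 | hk1
    · have : s k ≤ s 1 := hsmono.monotone hk1
      rw [hsk, hs1] at this
      omega
    · have : s 2 ≤ s k := hsmono.monotone hk1
      rw [hsk, hs2] at this
      have := hg i₀
      omega
  have hsub : insert (g j₀) ((range (m + 1)).image s) ⊆ A := by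
    intro x hx
    rcases Finset.mem_insert.1 hx with rfl | hx
    · exact hjmem
    · obtain ⟨k, hk, rfl⟩ := Finset.mem_image.1 hx
      have hk' := Finset.mem_range.1 hk
      exact hmem k (by omega)
  have hcard : (insert (g j₀) ((range (m + 1)).image s)).card = m + 2 := by
    rw [Finset.card_insert_of_notMem hnotmem,
      Finset.card_image_of_injective _ hsmono.injective, Finset.card_range]
  rw [← hcard]
  exact Finset.card_le_card hsub

lemma main_pos {m : ℕ} (g : Fin m → ℤ) (hg : ∀ i, 0 < g i) (S : Finset ℤ) :
    ∃ T : Finset ℤ, T.card = S.card ∧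
      ((∑ z ∈ S, ((fib g z).card : ℝ)) / 2 ^ m ≤ ∑ j ∈ T, pY m j) := by
  classical
  set k' : ℕ := min S.card (m + 1) with hk'
  set c : ℕ → ℝ := fun j => (m.choose j : ℝ) with hc
  set a : ℕ → ℕ := fun j =>
    ((univ : Finset (Finset (Fin m))).filter
      fun E => (∑ i ∈ E, g i) ∈ S ∧ E.card = j).card with ha
  -- (a) a j ≤ choose
  have hale : ∀ j, a j ≤ m.choose j := by
    intro j
    rw [← card_filter_card_eq m j]
    apply Finset.card_le_card
    intro E hE
    simp only [mem_filter] at hE ⊢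
    exact ⟨hE.1, hE.2.2⟩
  -- (b) sum of a j = total
  set total : ℕ :=
    ((univ : Finset (Finset (Fin m))).filter fun E => (∑ i ∈ E, g i) ∈ S).card with htot
  have hbsum : ∑ j ∈ range (m + 1), a j = total := by
    simp only [htot]
    rw [Finset.card_eq_sum_card_fiberwise
      (f := fun E : Finset (Fin m) => E.card) (t := range (m + 1))
      (fun E _ => by
        simp only [Finset.mem_coe, Finset.mem_range]
        have := E.card_le_univ
        simp only [Finset.card_univ, Fintype.card_fin] at this
        omega)]
    apply Finset.sum_congr rfl
    intro j _
    simp only [ha]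
    rw [Finset.filter_filter]
  -- (c) LYM bound
  have hb : ∀ j, (a j : ℝ) = ∑ z ∈ S, (((fib g z) # j).card : ℝ) := by
    intro j
    simp only [ha]
    rw [Finset.card_eq_sum_card_fiberwise
      (f := fun E : Finset (Fin m) => ∑ i ∈ E, g i) (t := S)
      (fun E hE => (Finset.mem_filter.1 hE).2.1)]
    push_cast
    apply Finset.sum_congr rfl
    intro z hz
    congr 1
    rw [Finset.filter_filter]
    congr 1
    ext E
    rw [Finset.mem_slice]
    unfold fib
    simp only [Finset.mem_filter, Finset.mem_univ, true_and]
    constructor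
    · rintro ⟨⟨_, hcard⟩, hsum⟩
      exact ⟨hsum, hcard⟩
    · rintro ⟨hsum, hcard⟩
      exact ⟨⟨hsum ▸ hz, hcard⟩, hsum⟩
  have hlym : ∑ j ∈ range (m + 1), (a j : ℝ) / c j ≤ (S.card : ℝ) := by
    have hswap : ∑ j ∈ range (m + 1), (a j : ℝ) / c j
        = ∑ z ∈ S, ∑ j ∈ range (m + 1), (((fib g z) # j).card : ℝ) / c j := by
      rw [Finset.sum_comm]
      apply Finset.sum_congr rfl
      intro j _
      rw [hb j, Finset.sum_div]
    rw [hswap]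
    calc ∑ z ∈ S, ∑ j ∈ range (m + 1), (((fib g z) # j).card : ℝ) / c j
        ≤ ∑ _z ∈ S, (1 : ℝ) := by
          apply Finset.sum_le_sum
          intro z _
          have hant := fib_antichain g hg z
          have := Finset.sum_card_slice_div_choose_le_one (𝕜 := ℝ) hant
          simpa [Fintype.card_fin] using this
      _ = S.card := by simp
  -- top-k' set
  obtain ⟨T', hT'sub, hT'card, hT'top⟩ := exists_topk c k' (range (m + 1))
    (by rw [Finset.card_range]; omega)
  -- knapsack
  have hcpos : ∀ j ∈ range (m + 1), 0 < c j := by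
    intro j hj
    simp only [hc]
    have hjm : j ≤ m := by have := Finset.mem_range.1 hj; omega
    have := Nat.choose_pos hjm
    exact_mod_cast this
  have ht1 : ∀ j ∈ range (m + 1), (a j : ℝ) / c j ≤ 1 := by
    intro j hj
    rw [div_le_one (hcpos j hj)]
    simp only [hc]
    exact_mod_cast hale j
  have hknap : (total : ℝ) ≤ ∑ j ∈ T', c j := by
    have hsum : ∑ j ∈ range (m + 1), (a j : ℝ) / c j ≤ (T'.card : ℝ) := by
      rw [hT'card, hk']
      have h2 : ∑ j ∈ range (m + 1), (a j : ℝ) / c j ≤ ((m + 1 : ℕ) : ℝ) := by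
        calc ∑ j ∈ range (m + 1), (a j : ℝ) / c j ≤ ∑ _j ∈ range (m + 1), (1 : ℝ) :=
              Finset.sum_le_sum ht1
          _ = ((m + 1 : ℕ) : ℝ) := by simp
      rcases min_cases S.card (m + 1) with ⟨hmin, _⟩ | ⟨hmin, _⟩ <;> rw [hmin]
      · exact hlym
      · exact h2
    have hk := knapsack (range (m + 1)) T' c (fun j => (a j : ℝ) / c j) hT'sub
      (fun j hj => (hcpos j hj).le)
      (fun j hj => div_nonneg (Nat.cast_nonneg _) (hcpos j hj).le)
      ht1 hT'top hsum
    have hlhs : ∑ j ∈ range (m + 1), c j * ((a j : ℝ) / c j) = (total : ℝ) := by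
      rw [← hbsum]
      push_cast
      apply Finset.sum_congr rfl
      intro j hj
      rw [mul_comm, div_mul_cancel₀ _ (ne_of_gt (hcpos j hj))]
    rw [hlhs] at hk
    exact hk
  -- build T
  set pad : Finset ℤ := (range (S.card - k')).image (fun n : ℕ => -((n : ℤ) + 1)) with hpad
  set T : Finset ℤ := T'.image (fun j : ℕ => (j : ℤ)) ∪ pad with hT
  have hdisj : Disjoint (T'.image (fun j : ℕ => (j : ℤ))) pad := by
    rw [Finset.disjoint_left]
    intro x hx hx'
    obtain ⟨j, _, rfl⟩ := Finset.mem_image.1 hx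
    obtain ⟨n, _, hn⟩ := Finset.mem_image.1 hx'
    omega
  have hTcard : T.card = S.card := by
    rw [hT, Finset.card_union_of_disjoint hdisj,
      Finset.card_image_of_injective _ (fun x y hxy => by exact_mod_cast hxy),
      Finset.card_image_of_injective _ (fun x y hxy => by omega),
      Finset.card_range, hT'card, hk']
    omega
  refine ⟨T, hTcard, ?_⟩
  have hpadzero : ∑ z ∈ pad, pY m z = 0 := by
    apply Finset.sum_eq_zero
    intro z hz
    obtain ⟨n, _, rfl⟩ := Finset.mem_image.1 hz
    rw [pY, if_neg (by omega)]
  have himg : ∑ z ∈ T'.image (fun j : ℕ => (j : ℤ)), pY m z = ∑ j ∈ T', c j / 2 ^ m := by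
    rw [Finset.sum_image (fun x _ y _ hxy => by exact_mod_cast hxy)]
    apply Finset.sum_congr rfl
    intro j hj
    have hjm : j ≤ m := by have := Finset.mem_range.1 (hT'sub hj); omega
    rw [pY, if_pos ⟨by positivity, by exact_mod_cast hjm⟩, Int.toNat_natCast]
  have hTsum : ∑ z ∈ T, pY m z = ∑ j ∈ T', c j / 2 ^ m := by
    rw [hT, Finset.sum_union hdisj, hpadzero, himg, add_zero]
  rw [hTsum]
  have htotal : ∑ z ∈ S, ((fib g z).card : ℝ) = (total : ℝ) := by
    simp only [htot]
    rw [Finset.card_eq_sum_card_fiberwise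
      (f := fun E : Finset (Fin m) => ∑ i ∈ E, g i) (t := S)
      (s := univ.filter fun E : Finset (Fin m) => (∑ i ∈ E, g i) ∈ S)
      (fun E hE => (Finset.mem_filter.1 hE).2)]
    push_cast
    apply Finset.sum_congr rfl
    intro z hz
    congr 1
    rw [Finset.filter_filter]
    unfold fib
    congr 1
    ext E
    simp only [Finset.mem_filter, Finset.mem_univ, true_and]
    constructor
    · exact fun hh => ⟨hh ▸ hz, hh⟩
    · exact fun hh => hh.2
  rw [htotal, ← Finset.sum_div]
  gcongr


lemma pX_shift {m : ℕ} (h : Fin m → ℤ) (z : ℤ) :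
    pX h z = ((fib (fun i => |h i|) (z + negpart h)).card : ℝ) / 2 ^ m := by
  rw [pX_eq, fib_flip]

end Aux

theorem majorization_littlewood_offord (m : ℕ) (hm : 1 ≤ m)
    (h : Fin m → ℤ) (hh : ∀ i, h i ≠ 0) :
    (∀ S : Finset ℤ, ∃ T : Finset ℤ, T.card = S.card ∧
      ∑ z ∈ S, pX h z ≤ ∑ j ∈ T, pY m j) ∧
    ((∀ v : ℝ, v ≠ 0 →
        {z : ℤ | pX h z = v}.ncard = {z : ℤ | pY m z = v}.ncard) ↔
      ∀ i j, |h i| = |h j|) := by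
  classical
  have hgpos : ∀ i : Fin m, 0 < |h i| := fun i => abs_pos.2 (hh i)
  -- translation of level sets
  have hlevshift : ∀ v : ℝ, {z : ℤ | pX h z = v} =
      (fun w : ℤ => w - negpart h) ''
        {w : ℤ | ((fib (fun i => |h i|) w).card : ℝ) / 2 ^ m = v} := by
    intro v
    ext z
    simp only [Set.mem_image, Set.mem_setOf_eq, pX_shift]
    constructor
    · intro hz
      exact ⟨z + negpart h, hz, by ring⟩
    · rintro ⟨w, hw, rfl⟩
      have hrw : w - negpart h + negpart h = w := by ring
      rw [hrw]
      exact hw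
  have hsubinj : Function.Injective (fun w : ℤ => w - negpart h) := by
    intro x y hxy
    simpa using hxy
  constructor
  · -- majorization
    intro S
    obtain ⟨T, hTcard, hle⟩ := main_pos (fun i => |h i|) hgpos
      (S.image (fun z => z + negpart h))
    refine ⟨T, ?_, ?_⟩
    · rw [hTcard, Finset.card_image_of_injective _ (fun x y hxy => by omega)]
    · refine le_trans (le_of_eq ?_) hle
      have himg : ∑ z ∈ Finset.image (fun z => z + negpart h) S,
          ((fib (fun i => |h i|) z).card : ℝ)
          = ∑ z ∈ S, ((fib (fun i => |h i|) (z + negpart h)).card : ℝ) :=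
        Finset.sum_image (fun x _ y _ hxy => by omega)
      rw [himg, Finset.sum_div]
      apply Finset.sum_congr rfl
      intro z _
      exact pX_shift h z
  · constructor
    · -- level sets equal → all abs equal
      intro hlev
      by_contra hcon
      push_neg at hcon
      obtain ⟨i, j, hij⟩ := hcon
      obtain ⟨i', j', hlt⟩ : ∃ i' j' : Fin m, |h i'| < |h j'| := by
        rcases lt_or_gt_of_ne hij with hl | hl
        exacts [⟨i, j, hl⟩, ⟨j, i, hl⟩]
      set A : Finset ℤ :=
        Finset.image (fun E : Finset (Fin m) => ∑ k ∈ E, |h k|) Finset.univ with hA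
      set B : Finset ℤ := (Finset.range (m + 1)).image (fun j : ℕ => (j : ℤ)) with hB
      have hcardB : B.card = m + 1 := by
        rw [hB, Finset.card_image_of_injective _
          (fun x y hxy => by exact_mod_cast hxy), Finset.card_range]
      have hAsupp : ∀ z : ℤ,
          ((fib (fun i => |h i|) z).card : ℝ) / 2 ^ m ≠ 0 ↔ z ∈ A := by
        intro z
        constructor
        · intro hz
          have hc0 : (fib (fun i => |h i|) z).card ≠ 0 := by
            intro hc
            rw [hc] at hz
            simp at hz
          obtain ⟨E, hE⟩ := Finset.card_ne_zero.1 hc0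
          rw [hA]
          exact Finset.mem_image.2 ⟨E, Finset.mem_univ _, (Finset.mem_filter.1 hE).2⟩
        · intro hz
          rw [hA] at hz
          obtain ⟨E, _, rfl⟩ := Finset.mem_image.1 hz
          have hEmem : E ∈ fib (fun i => |h i|) (∑ k ∈ E, |h k|) :=
            Finset.mem_filter.2 ⟨Finset.mem_univ _, rfl⟩
          have hpos : 0 < (fib (fun i => |h i|) (∑ k ∈ E, |h k|)).card :=
            Finset.card_pos.2 ⟨E, hEmem⟩
          apply div_ne_zero
          · exact_mod_cast hpos.ne'
          · positivity
      have hBsupp : ∀ z : ℤ, pY m z ≠ 0 ↔ z ∈ B := by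
        intro z
        rw [pY]
        by_cases hz : 0 ≤ z ∧ z ≤ m
        · rw [if_pos hz]
          constructor
          · intro _
            rw [hB]
            exact Finset.mem_image.2 ⟨z.toNat, Finset.mem_range.2 (by omega), by omega⟩
          · intro _
            apply div_ne_zero _ (by positivity)
            have hzt : z.toNat ≤ m := by omega
            exact_mod_cast (Nat.choose_pos hzt).ne'
        · rw [if_neg hz]
          constructor
          · intro h0
            exact absurd rfl h0
          · intro hzB
            exfalso
            rw [hB] at hzB
            obtain ⟨n, hn, rfl⟩ := Finset.mem_image.1 hzB
            have := Finset.mem_range.1 hn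
            omega
      have hlev' : ∀ v : ℝ, v ≠ 0 →
          {z : ℤ | ((fib (fun i => |h i|) z).card : ℝ) / 2 ^ m = v}.ncard
            = {z : ℤ | pY m z = v}.ncard := by
        intro v hv
        rw [← hlev v hv, hlevshift v, Set.ncard_image_of_injective _ hsubinj]
      have hAB := card_support_eq A B hAsupp hBsupp hlev'
      have hbig := support_big (fun i => |h i|) hgpos i' j' hlt
      rw [← hA] at hbig
      omega
    · -- all abs equal → level sets equal
      intro habs v hv
      set a : ℤ := |h ⟨0, by omega⟩| with ha
      have ha0 : a ≠ 0 := (hgpos _).ne'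
      have hconst : ∀ i : Fin m, |h i| = a := fun i => habs i ⟨0, by omega⟩
      have hq : ∀ j : ℤ, ((fib (fun i => |h i|) (a * j)).card : ℝ) / 2 ^ m = pY m j := by
        intro j
        rw [fib_const_card ha0 hconst j, pY]
        by_cases hj : 0 ≤ j ∧ j ≤ m
        · rw [if_pos hj, if_pos hj]
        · rw [if_neg hj, if_neg hj, zero_div]
      have h2 : {w : ℤ | ((fib (fun i => |h i|) w).card : ℝ) / 2 ^ m = v}
          = (fun j : ℤ => a * j) '' {j : ℤ | pY m j = v} := by
        ext w
        simp only [Set.mem_image, Set.mem_setOf_eq]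
        constructor
        · intro hw
          have hc0 : (fib (fun i => |h i|) w).card ≠ 0 := by
            intro hc
            rw [hc] at hw
            simp at hw
            exact hv hw.symm
          obtain ⟨j, rfl⟩ := fib_const_dvd hconst (Finset.card_ne_zero.1 hc0)
          exact ⟨j, by rw [← hq j]; exact hw, rfl⟩
        · rintro ⟨j, hj, rfl⟩
          rw [hq j]
          exact hj
      rw [hlevshift v, Set.ncard_image_of_injective _ hsubinj, h2,
        Set.ncard_image_of_injective _ (mul_right_injective₀ ha0)]
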